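/- If x, y, z ∈ ℝ² are three points with all pairwise distances in the interval [1, 1+δ] where 1+δ < 1/(2 sin(π/7)), then every angle of the triangle xyz lies strictly between π/7 and 5π/7; in particular each angle spanned at a vertex is greater than π/7. -/

import Mathlib

open Real EuclideanGeometry

set_option maxHeartbeats 1000000

/-- Key numeric lemma: if a triangle has sides `a b c ∈ [1, r]` with
`2 r sin(π/7) < 1`, then the angle opposite `a` is greater than `π/7`. -/
lemma key_angle_gt (r θ a b c : ℝ) (hr1 : 1 < r)
    (hrt : 2 * r * Real.sin (π / 7) < 1)
    (ha1 : 1 ≤ a) (hb1 : 1 ≤ b) (hbr : b ≤ r) (hc1 : 1 ≤ c) (hcr : c ≤ r)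
    (hθ0 : 0 ≤ θ) (hθπ : θ ≤ π)
    (hlaw : a * a = b * b + c * c - 2 * b * c * Real.cos θ) : π / 7 < θ := by
  have hπ := Real.pi_gt_d6
  have hπ' := Real.pi_lt_d2
  set s := Real.sin (π / 14) with hs
  set cc := Real.cos (π / 14) with hcc
  have hpyth : s ^ 2 + cc ^ 2 = 1 := Real.sin_sq_add_cos_sq (π / 14)
  have h714 : (π / 7 : ℝ) = 2 * (π / 14) := by ring
  have hC : Real.cos (π / 7) = 1 - 2 * s ^ 2 := by
    rw [h714, Real.cos_two_mul]; nlinarith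
  have hT : Real.sin (π / 7) = 2 * s * cc := by
    rw [h714, Real.sin_two_mul]
  have hs0 : 0 < s := by
    apply Real.sin_pos_of_pos_of_lt_pi <;> nlinarith
  have hs4 : s < 1 / 4 := by
    have := Real.sin_lt (show (0:ℝ) < π / 14 by nlinarith)
    nlinarith
  have hcc0 : 0 < cc := by
    apply Real.cos_pos_of_mem_Ioo
    constructor <;> [nlinarith; nlinarith]
  have ht42 : (0.42 : ℝ) < Real.sin (π / 7) := by
    have hx0 : (0 : ℝ) < π / 7 := by linarith
    have hx1 : (0.448 : ℝ) < π / 7 := by linarith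
    have hx2 : (π / 7 : ℝ) < 0.45 := by linarith
    have hx3 : (π / 7) ^ 3 < 0.092 := by
      have h := pow_lt_pow_left₀ hx2 hx0.le (n := 3) (by norm_num)
      nlinarith [h]
    have hgt := Real.sin_gt_sub_cube hx0
    nlinarith
  have hr0 : (0 : ℝ) < r := by linarith
  have hr12 : r < 1.2 := by nlinarith
  -- from 2 r (2 s cc) < 1 deduce r^2 s^2 < 1/15
  have hrs : 4 * r * s * cc < 1 := by rw [hT] at hrt; linarith
  have h1 : 16 * (r * s * cc) ^ 2 < 1 := by
    have hpos : 0 < 4 * r * s * cc := by positivity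
    nlinarith
  have h3 : r ^ 2 * s ^ 2 < 1 / 15 := by nlinarith [sq_nonneg (r * s), sq_nonneg s]
  by_contra hcon
  push_neg at hcon
  have hcosge : Real.cos (π / 7) ≤ Real.cos θ :=
    Real.cos_le_cos_of_nonneg_of_le_pi hθ0 (by nlinarith) hcon
  have hbc : b * c ≤ r * r := by nlinarith
  have hbc1 : (1 : ℝ) ≤ b * c := by nlinarith
  -- 1 ≤ a*a ≤ (b-c)^2 + 4 b c s^2 ≤ (r-1)^2 + 4 r^2 s^2 < 1
  have hstep : (1 : ℝ) ≤ (b - c) ^ 2 + 4 * (b * c) * s ^ 2 := by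
    have : a * a ≤ b * b + c * c - 2 * b * c * Real.cos (π / 7) := by nlinarith
    nlinarith
  have hbcs : 4 * (b * c) * s ^ 2 ≤ 4 * (r * r) * s ^ 2 := by nlinarith [sq_nonneg s]
  nlinarith [sq_nonneg (b - c), sq_nonneg (r - 1)]

theorem triangle_angle_bounds (δ : ℝ) (hδ0 : 0 < δ)
    (hδ1 : 1 + δ < 1 / (2 * Real.sin (π / 7)))
    (x y z : EuclideanSpace ℝ (Fin 2))
    (hxy : dist x y ∈ Set.Icc (1 : ℝ) (1 + δ))
    (hyz : dist y z ∈ Set.Icc (1 : ℝ) (1 + δ))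
    (hxz : dist x z ∈ Set.Icc (1 : ℝ) (1 + δ)) :
    (EuclideanGeometry.angle y x z ∈ Set.Ioo (π / 7) (5 * π / 7)) ∧
    (EuclideanGeometry.angle x y z ∈ Set.Ioo (π / 7) (5 * π / 7)) ∧
    (EuclideanGeometry.angle x z y ∈ Set.Ioo (π / 7) (5 * π / 7)) := by
  obtain ⟨hxy1, hxy2⟩ := hxy
  obtain ⟨hyz1, hyz2⟩ := hyz
  obtain ⟨hxz1, hxz2⟩ := hxz
  have hsin0 : 0 < Real.sin (π / 7) := by
    apply Real.sin_pos_of_pos_of_lt_pi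
    · positivity
    · nlinarith [Real.pi_pos]
  have hrt : 2 * (1 + δ) * Real.sin (π / 7) < 1 := by
    have h := (lt_div_iff₀ (by positivity : (0:ℝ) < 2 * Real.sin (π / 7))).1 hδ1
    nlinarith
  have hr1 : (1 : ℝ) < 1 + δ := by linarith
  -- lower bounds, via the key lemma and law of cosines
  have hAx : π / 7 < EuclideanGeometry.angle y x z := by
    apply key_angle_gt (1 + δ) _ (dist y z) (dist y x) (dist z x) hr1 hrt hyz1
      (by rwa [dist_comm]) (by rwa [dist_comm]) (by rwa [dist_comm]) (by rwa [dist_comm])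
      (EuclideanGeometry.angle_nonneg _ _ _) (EuclideanGeometry.angle_le_pi _ _ _)
    exact EuclideanGeometry.law_cos y x z
  have hAy : π / 7 < EuclideanGeometry.angle x y z := by
    apply key_angle_gt (1 + δ) _ (dist x z) (dist x y) (dist z y) hr1 hrt hxz1
      hxy1 hxy2 (by rwa [dist_comm]) (by rwa [dist_comm])
      (EuclideanGeometry.angle_nonneg _ _ _) (EuclideanGeometry.angle_le_pi _ _ _)
    exact EuclideanGeometry.law_cos x y z
  have hAz : π / 7 < EuclideanGeometry.angle x z y := by
    apply key_angle_gt (1 + δ) _ (dist x y) (dist x z) (dist y z) hr1 hrt hxy1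
      hxz1 hxz2 hyz1 hyz2
      (EuclideanGeometry.angle_nonneg _ _ _) (EuclideanGeometry.angle_le_pi _ _ _)
    exact EuclideanGeometry.law_cos x z y
  -- angle sum
  have hxz' : x ≠ z := by
    intro h; rw [h] at hxz1; simp at hxz1; linarith
  have hyz' : y ≠ z := by
    intro h; rw [h] at hyz1; simp at hyz1; linarith
  have hsum := EuclideanGeometry.angle_add_angle_add_angle_eq_pi y hxz'
  -- hsum : ∠ z x y + ∠ x y z + ∠ y z x = π
  rw [EuclideanGeometry.angle_comm z x y, EuclideanGeometry.angle_comm y z x] at hsum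
  refine ⟨⟨hAx, by linarith⟩, ⟨hAy, by linarith⟩, ⟨hAz, by linarith⟩⟩
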